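/- Let x, y, t ∈ ℂ with 1 + 4t ≠ 0, 1 - 12t not a negative real (so that √(1-12t) is defined by the principal branch) and 1 - 12t + 2√(1-12t) ≠ 0. Define u(x, y, t) = 4(5 - 12t + 4√(1-12t))²((-1 + 12t)x - 4y²) / (3(1 + 4t)(1 - 12t + 2√(1-12t))³). Then u satisfies the dispersionless KP (Zabolotskaya–Khokhlov) equation (u_t - (3/2) u u_x)_x = (3/4) u_{yy}. -/

import Mathlib

set_option maxHeartbeats 4000000 in
/-- The explicit function `u(x,y,t)` from Example 3 satisfies the dKP
(Zabolotskaya–Khokhlov) equation `(u_t - (3/2) u u_x)_x = (3/4) u_yy`,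
with `√(1-12t)` the principal branch `(1-12t)^{1/2}`. -/
theorem example3_solves_dKP (u : ℂ → ℂ → ℂ → ℂ)
    (hu : ∀ x y t : ℂ,
      u x y t = 4 * (5 - 12 * t + 4 * (1 - 12 * t) ^ ((1 : ℂ) / 2)) ^ 2
          * ((-1 + 12 * t) * x - 4 * y ^ 2)
        / (3 * (1 + 4 * t)
            * (1 - 12 * t + 2 * (1 - 12 * t) ^ ((1 : ℂ) / 2)) ^ 3)) :
    ∀ x y t : ℂ, 1 + 4 * t ≠ 0 → (1 - 12 * t) ∈ Complex.slitPlane →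
      1 - 12 * t + 2 * (1 - 12 * t) ^ ((1 : ℂ) / 2) ≠ 0 →
      deriv (fun x' =>
          deriv (fun t' => u x' y t') t
            - (3 / 2) * u x' y t * deriv (fun x'' => u x'' y t) x') x
        = (3 / 4) * deriv (fun y' => deriv (fun y'' => u x y'' t) y') y := by
  intro x y t h1 hmem hD
  have hz0 : (1 : ℂ) - 12 * t ≠ 0 := Complex.slitPlane_ne_zero hmem
  have hs2 : ((1 - 12 * t) ^ ((1 : ℂ) / 2)) ^ 2 = 1 - 12 * t := by
    rw [sq, ← Complex.cpow_add _ _ hz0]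
    norm_num
  have hs0 : (1 - 12 * t) ^ ((1 : ℂ) / 2) ≠ 0 := by
    intro h
    apply hz0
    rw [← hs2, h]
    ring
  have hw : (1 - 12 * t) ^ ((1 : ℂ) / 2 - 1) = ((1 - 12 * t) ^ ((1 : ℂ) / 2))⁻¹ := by
    rw [show (1 : ℂ) / 2 - 1 = -(1 / 2) by norm_num, Complex.cpow_neg]
  have hS2ne : (1 - 12 * t) ^ ((1 : ℂ) / 2) - 2 ≠ 0 := by
    intro h
    apply h1
    have h2 : (1 - 12 * t) ^ ((1 : ℂ) / 2) = 2 := by linear_combination h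
    rw [h2] at hs2
    linear_combination ((1 : ℂ) / 3) * hs2
  have hQ0 : 3 * (1 + 4 * t)
      * (1 - 12 * t + 2 * (1 - 12 * t) ^ ((1 : ℂ) / 2)) ^ 3 ≠ 0 := by
    apply mul_ne_zero (mul_ne_zero (by norm_num) h1)
    exact pow_ne_zero _ hD
  -- derivative of t' ↦ 1 - 12 t'
  have hlin : HasDerivAt (fun t' : ℂ => 1 - 12 * t') (-12) t := by
    simpa using ((hasDerivAt_id' (𝕜 := ℂ) t).const_mul (12 : ℂ)).const_sub 1
  -- derivative of the square root
  have hs_t := hlin.cpow_const (c := (1 : ℂ) / 2) hmem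
  -- derivative of 5 - 12 t' + 4 √(1-12t')
  have h5 : HasDerivAt (fun t' : ℂ => 5 - 12 * t') (-12) t := by
    simpa using ((hasDerivAt_id' (𝕜 := ℂ) t).const_mul (12 : ℂ)).const_sub 5
  have hE := h5.add (hs_t.const_mul 4)
  -- derivative of the numerator, as a function of t', for each fixed x'
  have hM : ∀ x' : ℂ, HasDerivAt (fun t' : ℂ => (-1 + 12 * t') * x' - 4 * y ^ 2)
      (12 * 1 * x') t := fun x' =>
    ((((hasDerivAt_id' t).const_mul (12 : ℂ)).const_add (-1)).mul_const x').sub_const (4 * y ^ 2)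
  have hNum := fun x' : ℂ => ((hE.pow 2).const_mul 4).mul (hM x')
  -- derivative of the denominator
  have h14 : HasDerivAt (fun t' : ℂ => 3 * (1 + 4 * t')) (3 * (4 * 1)) t :=
    (((hasDerivAt_id' t).const_mul (4 : ℂ)).const_add 1).const_mul 3
  have hDl := hlin.add (hs_t.const_mul 2)
  have hDen := h14.mul (hDl.pow 3)
  have hT := fun x' : ℂ => ((hNum x').div hDen hQ0).deriv
  -- derivative in x
  have hXc : ∀ x' : ℂ, HasDerivAt (fun x'' : ℂ => (-1 + 12 * t) * x'' - 4 * y ^ 2)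
      ((-1 + 12 * t) * 1) x' := fun x' =>
    (((hasDerivAt_id' x').const_mul (-1 + 12 * t))).sub_const (4 * y ^ 2)
  have hXd := fun x' : ℂ =>
    (((hXc x').const_mul (4 * (5 - 12 * t + 4 * (1 - 12 * t) ^ ((1 : ℂ) / 2)) ^ 2)).div_const
      (3 * (1 + 4 * t) * (1 - 12 * t + 2 * (1 - 12 * t) ^ ((1 : ℂ) / 2)) ^ 3)).deriv
  -- derivative in y
  have hYc : ∀ y' : ℂ, HasDerivAt (fun y'' : ℂ => (-1 + 12 * t) * x - 4 * y'' ^ 2)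
      (-(4 * (2 * y' ^ 1 * 1))) y' := fun y' =>
    (((hasDerivAt_id' y').pow 2).const_mul 4).const_sub ((-1 + 12 * t) * x)
  have hYd := fun y' : ℂ =>
    (((hYc y').const_mul (4 * (5 - 12 * t + 4 * (1 - 12 * t) ^ ((1 : ℂ) / 2)) ^ 2)).div_const
      (3 * (1 + 4 * t) * (1 - 12 * t + 2 * (1 - 12 * t) ^ ((1 : ℂ) / 2)) ^ 3)).deriv
  -- the inner y-derivative is linear in y'
  have hInner : (fun y' : ℂ => deriv (fun y'' => u x y'' t) y')
      = fun y' : ℂ => (-32 * (5 - 12 * t + 4 * (1 - 12 * t) ^ ((1 : ℂ) / 2)) ^ 2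
          / (3 * (1 + 4 * t) * (1 - 12 * t + 2 * (1 - 12 * t) ^ ((1 : ℂ) / 2)) ^ 3)) * y' := by
    funext y'
    simp only [hu]
    rw [hYd y']
    ring
  -- the function inside the outer x-derivative is affine in x'
  have hF : (fun x' : ℂ => deriv (fun t' => u x' y t') t
        - 3 / 2 * u x' y t * deriv (fun x'' => u x'' y t) x')
      = fun x' : ℂ => (24 / (((1 - 12 * t) ^ ((1 : ℂ) / 2) - 2)
            * ((1 - 12 * t) ^ ((1 : ℂ) / 2)) ^ 3)) * x'
          + 288 * y ^ 2 / (((1 - 12 * t) ^ ((1 : ℂ) / 2) - 2)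
            * ((1 - 12 * t) ^ ((1 : ℂ) / 2)) ^ 5) := by
    funext x'
    simp only [hu]
    erw [hT x']
    simp only [Pi.add_apply, Pi.mul_apply, Pi.pow_apply, Pi.div_apply]
    rw [hXd x', hw]
    push_cast
    set S := (1 - 12 * t) ^ ((1 : ℂ) / 2) with hSdef
    clear_value S
    have hSp2 : S + 2 ≠ 0 := by
      intro h
      apply h1
      have h2 : S = -2 := by linear_combination h
      rw [h2] at hs2
      linear_combination ((1 : ℂ) / 3) * hs2
    have h2S : (2 : ℂ) - S ≠ 0 := by
      intro h
      exact hS2ne (by linear_combination -h)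
    have e1 : 1 + 4 * t = (2 - S) * (2 + S) / 3 := by
      linear_combination ((1 : ℂ) / 3) * hs2
    have e2 : 1 - 12 * t + 2 * S = S * (S + 2) := by
      linear_combination (-1 : ℂ) * hs2
    have e3 : -1 + 12 * t = -S ^ 2 := by linear_combination hs2
    have e4 : 5 - 12 * t + 4 * S = (S + 2) ^ 2 := by
      linear_combination (-1 : ℂ) * hs2
    rw [e4, e2, e3, e1]
    have h2S' : (2 : ℂ) + S ≠ 0 := by
      intro h
      exact hSp2 (by linear_combination h)
    rw [show (3:ℂ) * ((2 - S) * (2 + S) / 3) = (2 - S) * (2 + S) from by ring]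
    rw [show 4 * (2 * ((S + 2) ^ 2) ^ 1 * (-12 + 4 * (1 / 2 * S⁻¹ * -12))) = -96 * (S + 2) ^ 3 / S by
          field_simp; ring,
        show 3 * (S * (S + 2)) ^ 2 * (-12 + 2 * (1 / 2 * S⁻¹ * -12)) = -36 * S * (S + 1) * (S + 2) ^ 2 by
          field_simp; ring]
    field_simp [hs0, h2S, h2S', hSp2, hS2ne]
    ring
  rw [hF, hInner]
  rw [(((hasDerivAt_id' x).const_mul (24 / (((1 - 12 * t) ^ ((1 : ℂ) / 2) - 2)
      * ((1 - 12 * t) ^ ((1 : ℂ) / 2)) ^ 3))).add_const (288 * y ^ 2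
      / (((1 - 12 * t) ^ ((1 : ℂ) / 2) - 2) * ((1 - 12 * t) ^ ((1 : ℂ) / 2)) ^ 5))).deriv]
  rw [((hasDerivAt_id' y).const_mul (-32 * (5 - 12 * t + 4 * (1 - 12 * t) ^ ((1 : ℂ) / 2)) ^ 2
      / (3 * (1 + 4 * t) * (1 - 12 * t + 2 * (1 - 12 * t) ^ ((1 : ℂ) / 2)) ^ 3))).deriv]
  set S := (1 - 12 * t) ^ ((1 : ℂ) / 2) with hSdef
  clear_value S
  have hSp2 : S + 2 ≠ 0 := by
    intro h
    apply h1
    have h2 : S = -2 := by linear_combination h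
    rw [h2] at hs2
    linear_combination ((1 : ℂ) / 3) * hs2
  have h2S : (2 : ℂ) - S ≠ 0 := by
    intro h
    exact hS2ne (by linear_combination -h)
  have h2S' : (2 : ℂ) + S ≠ 0 := by
    intro h
    exact hSp2 (by linear_combination h)
  have e1 : 1 + 4 * t = (2 - S) * (2 + S) / 3 := by
    linear_combination ((1 : ℂ) / 3) * hs2
  have e2 : 1 - 12 * t + 2 * S = S * (S + 2) := by
    linear_combination (-1 : ℂ) * hs2
  have e4 : 5 - 12 * t + 4 * S = (S + 2) ^ 2 := by
    linear_combination (-1 : ℂ) * hs2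
  rw [e4, e2, e1]
  rw [show (3:ℂ) * ((2 - S) * (2 + S) / 3) = (2 - S) * (2 + S) from by ring]
  field_simp [hs0, h2S, h2S', hSp2, hS2ne]
  ring
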